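/- Let (X,d) be a complete metric space, let {T_n}_{n≥1} be a family of self-maps of X and let f be a continuous self-map of X such that for each n the pair (T_n, f) is compatible and T_n(X) ⊆ f(X). Suppose there exist constants a_1, a_2, a_3, a_4, a_5 ≥ 0 with a_1 + a_2 + a_3 + a_4 + a_5 < 1 such that for all indices i, j and all x, y ∈ X, d(T_i x, T_j y) ≤ a_1 d(T_i x, fx) + a_2 d(T_j y, fy) + a_3 d(T_i x, fy) + a_4 d(T_j y, fx) + a_5 d(fx, fy). Then there exists a unique point z ∈ X with fz = z and T_n z = z for every n. -/
import Mathlib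


/-- Two self-maps `T` and `f` of a metric space are *compatible* if
`d(f(T xₙ), T(f xₙ)) → 0` whenever `f xₙ → t` and `T xₙ → t` for some `t`. -/
def CompatiblePair {X : Type*} [MetricSpace X] (T f : X → X) : Prop :=
  ∀ (x : ℕ → X) (t : X),
    Filter.Tendsto (fun n => f (x n)) Filter.atTop (nhds t) →
    Filter.Tendsto (fun n => T (x n)) Filter.atTop (nhds t) →
    Filter.Tendsto (fun n => dist (f (T (x n))) (T (f (x n)))) Filter.atTop (nhds 0)

/-- Som's theorem: a family `{T n}` of self-maps of a complete metric space and a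
continuous self-map `f`, each pair `(T n, f)` compatible with `T n (X) ⊆ f(X)`,
satisfying a five-constant contractive condition, have a unique common fixed point. -/
theorem som_common_fixed_point
    {X : Type*} [MetricSpace X] [CompleteSpace X] [Nonempty X]
    (T : ℕ → X → X) (f : X → X) (hfc : Continuous f)
    (hcompat : ∀ n, 1 ≤ n → CompatiblePair (T n) f)
    (hsub : ∀ n, 1 ≤ n → Set.range (T n) ⊆ Set.range f)
    (a₁ a₂ a₃ a₄ a₅ : ℝ)
    (h₁ : 0 ≤ a₁) (h₂ : 0 ≤ a₂) (h₃ : 0 ≤ a₃) (h₄ : 0 ≤ a₄) (h₅ : 0 ≤ a₅)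
    (hsum : a₁ + a₂ + a₃ + a₄ + a₅ < 1)
    (hcontr : ∀ i, 1 ≤ i → ∀ j, 1 ≤ j → ∀ x y,
      dist (T i x) (T j y) ≤ a₁ * dist (T i x) (f x) + a₂ * dist (T j y) (f y)
        + a₃ * dist (T i x) (f y) + a₄ * dist (T j y) (f x) + a₅ * dist (f x) (f y)) :
    ∃! z, f z = z ∧ ∀ n, 1 ≤ n → T n z = z := by
  classical
  obtain ⟨x0⟩ := ‹Nonempty X›
  have hstep : ∀ (u : X) (n : ℕ), ∃ v, f v = T (n + 1) u := by
    intro u n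
    exact hsub (n + 1) (Nat.le_add_left 1 n) ⟨u, rfl⟩
  choose g hg using hstep
  set x : ℕ → X := fun n => Nat.rec x0 (fun n u => g u n) n with hxdef
  have hx : ∀ n, f (x (n + 1)) = T (n + 1) (x n) := fun n => hg (x n) n
  set y : ℕ → X := fun n => f (x n) with hydef
  set D : ℕ → ℝ := fun n => dist (y n) (y (n + 1)) with hDdef
  have hD0 : ∀ n, 0 ≤ D n := fun n => dist_nonneg
  set A : ℝ := a₁ + a₂ + a₃ + a₄ with hAdef
  have hA2 : 0 < 2 - A := by simp only [hAdef]; linarith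
  set k : ℝ := (A + 2 * a₅) / (2 - A) with hkdef
  have hk0 : 0 ≤ k := by
    apply div_nonneg _ hA2.le
    simp only [hAdef]; linarith
  have hk1 : k < 1 := by
    rw [hkdef, div_lt_one hA2]
    simp only [hAdef]; linarith
  -- the basic contraction estimate for consecutive terms
  have hDk : ∀ n, D (n + 1) ≤ k * D n := by
    intro n
    have h1 := hcontr (n + 1) (Nat.le_add_left 1 n) (n + 2) (Nat.le_add_left 1 (n + 1))
      (x n) (x (n + 1))
    have h2 := hcontr (n + 2) (Nat.le_add_left 1 (n + 1)) (n + 1) (Nat.le_add_left 1 n)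
      (x (n + 1)) (x n)
    have e1 : T (n + 1) (x n) = y (n + 1) := (hx n).symm
    have e2 : T (n + 2) (x (n + 1)) = y (n + 2) := (hx (n + 1)).symm
    rw [e1, e2] at h1 h2
    have tri : dist (y (n + 2)) (y n) ≤ dist (y (n + 2)) (y (n + 1)) + dist (y (n + 1)) (y n) :=
      dist_triangle _ _ _
    have c1 : dist (y (n + 1)) (y (n + 2)) = D (n + 1) := rfl
    have c2 : dist (y (n + 2)) (y (n + 1)) = D (n + 1) := dist_comm _ _
    have c3 : dist (y (n + 1)) (y n) = D n := dist_comm _ _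
    have c4 : dist (y n) (y (n + 1)) = D n := rfl
    have c5 : dist (y (n + 1)) (y (n + 1)) = 0 := dist_self _
    have key : (2 - A) * D (n + 1) ≤ (A + 2 * a₅) * D n := by
      simp only [hydef] at h1 h2 c1 c2 c3 c4 c5 tri ⊢
      nlinarith [h1, h2, tri, dist_nonneg (x := f (x (n + 2))) (y := f (x n))]
    rw [div_mul_eq_mul_div, le_div_iff₀ hA2]
    nlinarith [key]
  have hDgeo : ∀ n, D n ≤ D 0 * k ^ n := by
    intro n
    induction n with
    | zero => simp
    | succ n ih =>
      calc D (n + 1) ≤ k * D n := hDk n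
        _ ≤ k * (D 0 * k ^ n) := by
            exact mul_le_mul_of_nonneg_left ih hk0
        _ = D 0 * k ^ (n + 1) := by ring
  have hcauchy : CauchySeq y := cauchySeq_of_le_geometric k (D 0) hk1 hDgeo
  obtain ⟨z, hz⟩ := cauchySeq_tendsto_of_complete hcauchy
  have hz1 : Filter.Tendsto (fun n => y (n + 1)) Filter.atTop (nhds z) :=
    hz.comp (Filter.tendsto_add_atTop_nat 1)
  have hDlim : Filter.Tendsto D Filter.atTop (nhds 0) := by
    have := hz.dist hz1
    simpa using this
  -- for each fixed index i, T i (x n) → z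
  have hclim : ∀ i, 1 ≤ i →
      Filter.Tendsto (fun n => dist (T i (x n)) (y n)) Filter.atTop (nhds 0) := by
    intro i hi
    have h13 : a₁ + a₃ < 1 := by linarith
    have hC0 : 0 < 1 - a₁ - a₃ := by linarith
    apply squeeze_zero (fun n => dist_nonneg)
      (g := fun n => (1 + a₂ + a₄) / (1 - a₁ - a₃) * D n)
    · intro n
      have h1 := hcontr i hi (n + 1) (Nat.le_add_left 1 n) (x n) (x n)
      rw [(hx n).symm] at h1
      have tri : dist (T i (x n)) (y n) ≤ dist (T i (x n)) (y (n + 1)) + dist (y (n + 1)) (y n) :=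
        dist_triangle _ _ _
      have c3 : dist (y (n + 1)) (y n) = D n := dist_comm _ _
      have c5 : dist (f (x n)) (f (x n)) = 0 := dist_self _
      rw [div_mul_eq_mul_div, le_div_iff₀ hC0]
      simp only [hydef, hDdef] at *
      nlinarith [h1, tri]
    · have : Filter.Tendsto (fun n => (1 + a₂ + a₄) / (1 - a₁ - a₃) * D n)
          Filter.atTop (nhds ((1 + a₂ + a₄) / (1 - a₁ - a₃) * 0)) :=
        hDlim.const_mul _
      simpa using this
  have hTlim : ∀ i, 1 ≤ i → Filter.Tendsto (fun n => T i (x n)) Filter.atTop (nhds z) := by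
    intro i hi
    refine hz.congr_dist ?_
    have := hclim i hi
    simpa [dist_comm] using this
  -- compatibility: T i (y n) → f z
  have hfylim : Filter.Tendsto (fun n => f (y n)) Filter.atTop (nhds (f z)) :=
    (hfc.tendsto z).comp hz
  have hTylim : ∀ i, 1 ≤ i → Filter.Tendsto (fun n => T i (y n)) Filter.atTop (nhds (f z)) := by
    intro i hi
    have hcd := hcompat i hi x z hz (hTlim i hi)
    have hfT : Filter.Tendsto (fun n => f (T i (x n))) Filter.atTop (nhds (f z)) :=
      (hfc.tendsto z).comp (hTlim i hi)
    exact hfT.congr_dist hcd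
  -- f z = z
  have hzz : Filter.Tendsto (fun n => dist (y (n + 1)) (y n)) Filter.atTop (nhds 0) := by
    have := hz1.dist hz
    simpa using this
  have hfz : f z = z := by
    have key : dist (f z) z ≤ a₁ * 0 + a₂ * 0 + a₃ * dist (f z) z + a₄ * dist z (f z)
        + a₅ * dist (f z) z := by
      refine le_of_tendsto_of_tendsto' (b := Filter.atTop (α := ℕ))
        (f := fun n => dist (T 1 (y n)) (y (n + 1)))
        (g := fun n => a₁ * dist (T 1 (y n)) (f (y n)) + a₂ * dist (y (n + 1)) (y n)
          + a₃ * dist (T 1 (y n)) (y n) + a₄ * dist (y (n + 1)) (f (y n))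
          + a₅ * dist (f (y n)) (y n)) ?_ ?_ ?_
      · exact (hTylim 1 le_rfl).dist hz1
      · have t1 := (hTylim 1 le_rfl).dist hfylim
        have t3 := (hTylim 1 le_rfl).dist hz
        have t4 := hz1.dist hfylim
        have t5 := hfylim.dist hz
        simp only [dist_self] at t1
        exact ((((t1.const_mul a₁).add (hzz.const_mul a₂)).add
          (t3.const_mul a₃)).add (t4.const_mul a₄)).add (t5.const_mul a₅)
      · intro n
        have h1 := hcontr 1 le_rfl (n + 1) (Nat.le_add_left 1 n) (y n) (x n)
        rw [(hx n).symm] at h1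
        exact h1
    have := dist_nonneg (x := f z) (y := z)
    have hc : dist z (f z) = dist (f z) z := dist_comm _ _
    rw [← dist_eq_zero]
    nlinarith
  -- T i z = z
  have hTz : ∀ i, 1 ≤ i → T i z = z := by
    intro i hi
    have key : dist (T i z) z ≤ a₁ * dist (T i z) z + a₂ * 0 + a₃ * dist (T i z) z
        + a₄ * 0 + a₅ * 0 := by
      refine le_of_tendsto_of_tendsto' (b := Filter.atTop (α := ℕ))
        (f := fun n => dist (T i z) (y (n + 1)))
        (g := fun n => a₁ * dist (T i z) z + a₂ * dist (y (n + 1)) (y n)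
          + a₃ * dist (T i z) (y n) + a₄ * dist (y (n + 1)) z
          + a₅ * dist z (y n)) ?_ ?_ ?_
      · exact tendsto_const_nhds.dist hz1
      · have t3 := (tendsto_const_nhds (x := T i z) (f := Filter.atTop (α := ℕ))).dist hz
        have t4 := hz1.dist (tendsto_const_nhds (x := z) (f := Filter.atTop (α := ℕ)))
        have t5 := (tendsto_const_nhds (x := z) (f := Filter.atTop (α := ℕ))).dist hz
        simp only [dist_self] at t4 t5
        exact ((((tendsto_const_nhds.const_mul a₁).add (hzz.const_mul a₂)).add
          (t3.const_mul a₃)).add (t4.const_mul a₄)).add (t5.const_mul a₅)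
      · intro n
        have h1 := hcontr i hi (n + 1) (Nat.le_add_left 1 n) z (x n)
        rw [(hx n).symm, hfz] at h1
        exact h1
    have := dist_nonneg (x := T i z) (y := z)
    rw [← dist_eq_zero]
    nlinarith
  refine ⟨z, ⟨hfz, hTz⟩, ?_⟩
  rintro w ⟨hwf, hwT⟩
  have h1 := hcontr 1 le_rfl 1 le_rfl w z
  rw [hwT 1 le_rfl, hTz 1 le_rfl, hwf, hfz] at h1
  simp only [dist_self] at h1
  have hc : dist z w = dist w z := dist_comm _ _
  have := dist_nonneg (x := w) (y := z)
  rw [← dist_eq_zero]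
  nlinarith
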